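/- Let n ≥ 1 and α ∈ (0,1), and let (S_1, …, S_{n+1}) be real-valued random variables whose joint distribution is μ, a probability measure on ℝ^{n+1} (the variables need not be exchangeable or independent). Let k = ⌈(1−α)(n+1)⌉, assume k ≤ n, and let Q denote the k-th smallest value among S_1, …, S_n. Then P(S_{n+1} ≤ Q) ≥ 1 − α − (1/(n+1)) Σ_{i=1}^{n} TV(μ, μ^{i↔n+1}), where μ^{i↔n+1} denotes the pushforward of μ under the measurable map on ℝ^{n+1} that swaps the i-th and (n+1)-th coordinates. -/

import Mathlib

open MeasureTheory Filter

/-- Total variation distance between two measures: the supremum over measurable sets `A`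
of `|P(A) − Q(A)|`. -/
noncomputable def tvDist {α : Type*} [MeasurableSpace α] (P Q : Measure α) : ℝ :=
  ⨆ A : {A : Set α // MeasurableSet A}, |(P A.1).toReal - (Q A.1).toReal|

/-- The `k`-th smallest value of a list of reals (`k` counted from 1). -/
noncomputable def kthSmallest (l : List ℝ) (k : ℕ) : ℝ :=
  (l.mergeSort (fun a b => a ≤ b)).getD (k - 1) 0

/-! ### Auxiliary lemmas -/

theorem countP_ofFn_aux (n : ℕ) (f : Fin n → ℝ) (p : ℝ → Bool) :
    (List.ofFn f).countP p = (Finset.univ.filter (fun i => p (f i) = true)).card := by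
  rw [List.ofFn_eq_map, List.countP_map, List.countP_eq_length_filter]
  rw [Fin.univ_def]
  simp only [Finset.filter, Finset.card, Multiset.filter_coe, Multiset.coe_card]
  congr 1
  apply List.filter_congr
  intro x _
  simp [Function.comp]

theorem mergeSort_facts_aux (l : List ℝ) :
    (l.mergeSort (fun a b => a ≤ b)).length = l.length ∧
    (∀ i j (hi : i < (l.mergeSort (fun a b => a ≤ b)).length)
      (hj : j < (l.mergeSort (fun a b => a ≤ b)).length), i ≤ j →
      (l.mergeSort (fun a b => a ≤ b))[i] ≤ (l.mergeSort (fun a b => a ≤ b))[j]) ∧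
    ∀ p : ℝ → Bool, (l.mergeSort (fun a b => a ≤ b)).countP p = l.countP p := by
  set m := l.mergeSort (fun a b => a ≤ b) with hm
  have hperm : m.Perm l := List.mergeSort_perm l _
  have hsorted := List.pairwise_mergeSort (le := fun a b : ℝ => decide (a ≤ b))
    (by intro a b c; simp; exact le_trans) (by intro a b; simp [le_total]) l
  rw [List.pairwise_iff_getElem] at hsorted
  refine ⟨hperm.length_eq, ?_, fun p => hperm.countP_eq p⟩
  intro i j hi hj hij
  rcases eq_or_lt_of_le hij with h | h
  · subst h; exact le_refl _
  · simpa using hsorted i j hi hj h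

theorem le_kthSmallest_iff_aux (l : List ℝ) (k : ℕ) (hk1 : 1 ≤ k) (hkl : k ≤ l.length)
    (a : ℝ) : a ≤ kthSmallest l k ↔ l.countP (fun x => decide (x < a)) < k := by
  obtain ⟨hlen, hmono, hcount⟩ := mergeSort_facts_aux l
  set m := l.mergeSort (fun a b => a ≤ b) with hm
  have hk1' : k - 1 < m.length := by omega
  have hv : kthSmallest l k = m[k - 1] := List.getD_eq_getElem m 0 hk1'
  rw [← hcount, hv]
  constructor
  · intro ha
    have hsplit : m.countP (fun x => decide (x < a)) =
        (m.take (k-1)).countP (fun x => decide (x < a)) +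
        (m.drop (k-1)).countP (fun x => decide (x < a)) := by
      conv_lhs => rw [← List.take_append_drop (k-1) m, List.countP_append]
    have h1 : (m.take (k-1)).countP (fun x => decide (x < a)) ≤ k - 1 := by
      calc (m.take (k-1)).countP (fun x => decide (x < a)) ≤ (m.take (k-1)).length :=
            List.countP_le_length
        _ ≤ k - 1 := by rw [List.length_take]; omega
    have h2 : (m.drop (k-1)).countP (fun x => decide (x < a)) = 0 := by
      rw [List.countP_eq_zero]
      intro x hx
      rw [List.mem_iff_getElem] at hx
      obtain ⟨j, hj, rfl⟩ := hx
      rw [List.getElem_drop]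
      simp only [decide_eq_true_eq, not_lt]
      refine le_trans ha
        (hmono (k-1) (k-1+j) hk1' (by rw [List.length_drop] at hj; omega) (by omega))
    omega
  · intro hcnt
    by_contra hlt
    push_neg at hlt
    have : k ≤ m.countP (fun x => decide (x < a)) := by
      have hsplit : m.countP (fun x => decide (x < a)) =
          (m.take k).countP (fun x => decide (x < a)) +
          (m.drop k).countP (fun x => decide (x < a)) := by
        conv_lhs => rw [← List.take_append_drop k m, List.countP_append]
      have hall : (m.take k).countP (fun x => decide (x < a)) = (m.take k).length := by
        rw [List.countP_eq_length]
        intro x hx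
        rw [List.mem_iff_getElem] at hx
        obtain ⟨j, hj, rfl⟩ := hx
        rw [List.getElem_take]
        simp only [decide_eq_true_eq]
        have hjlen : j < m.length := by rw [List.length_take] at hj; omega
        exact lt_of_le_of_lt
          (hmono j (k-1) hjlen hk1' (by rw [List.length_take] at hj; omega)) hlt
      rw [hsplit, hall, List.length_take]
      omega
    omega

theorem kthSmallest_countP_le_aux (l : List ℝ) (k : ℕ) (hk1 : 1 ≤ k) (hkl : k ≤ l.length) :
    k ≤ l.countP (fun x => decide (x ≤ kthSmallest l k)) := by
  obtain ⟨hlen, hmono, hcount⟩ := mergeSort_facts_aux l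
  set m := l.mergeSort (fun a b => a ≤ b) with hm
  have hk1' : k - 1 < m.length := by omega
  have hv : kthSmallest l k = m[k - 1] := List.getD_eq_getElem m 0 hk1'
  rw [← hcount]
  have key : ∀ v : ℝ, (∀ j (hj : j < m.length), j ≤ k - 1 → m[j] ≤ v) →
      k ≤ m.countP (fun x => decide (x ≤ v)) := by
    intro v hvle
    have hsplit : m.countP (fun x => decide (x ≤ v)) =
        (m.take k).countP (fun x => decide (x ≤ v)) +
        (m.drop k).countP (fun x => decide (x ≤ v)) := by
      conv_lhs => rw [← List.take_append_drop k m, List.countP_append]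
    have hall : (m.take k).countP (fun x => decide (x ≤ v)) = (m.take k).length := by
      rw [List.countP_eq_length]
      intro x hx
      rw [List.mem_iff_getElem] at hx
      obtain ⟨j, hj, rfl⟩ := hx
      rw [List.getElem_take]
      simp only [decide_eq_true_eq]
      exact hvle j (by rw [List.length_take] at hj; omega)
        (by rw [List.length_take] at hj; omega)
    rw [hsplit, hall, List.length_take]
    omega
  rw [hv]
  exact key m[k-1] (fun j hj hle => hmono j (k-1) hj hk1' hle)

/-- The number of indices `m ≠ i` with `x m < x i`. -/
noncomputable def cnt {n : ℕ} (x : Fin (n + 1) → ℝ) (i : Fin (n + 1)) : ℕ :=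
  (Finset.univ.filter fun m => m ≠ i ∧ x m < x i).card

theorem cnt_comp_equiv {n : ℕ} (e : Equiv.Perm (Fin (n + 1))) (x : Fin (n + 1) → ℝ)
    (i : Fin (n + 1)) : cnt (x ∘ e) i = cnt x (e i) := by
  classical
  unfold cnt
  apply Finset.card_bij (fun m _ => e m)
  · intro a ha
    simp only [Finset.mem_filter, Finset.mem_univ, true_and] at ha ⊢
    exact ⟨fun h => ha.1 (e.injective h), ha.2⟩
  · intro a _ b _ h
    exact e.injective h
  · intro b hb
    simp only [Finset.mem_filter, Finset.mem_univ, true_and] at hb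
    refine ⟨e.symm b, ?_, by simp⟩
    simp only [Finset.mem_filter, Finset.mem_univ, true_and, Function.comp_apply,
      Equiv.apply_symm_apply]
    exact ⟨fun h => hb.1 (by rw [← h, Equiv.apply_symm_apply]), hb.2⟩

theorem cov_iff_cnt {n : ℕ} (x : Fin (n + 1) → ℝ) (k : ℕ) (hk1 : 1 ≤ k) (hkn : k ≤ n) :
    (x (Fin.last n) ≤ kthSmallest (List.ofFn fun j : Fin n => x j.castSucc) k) ↔
      cnt x (Fin.last n) < k := by
  classical
  rw [le_kthSmallest_iff_aux _ k hk1 (by simp [hkn]), countP_ofFn_aux]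
  unfold cnt
  have hcard : (Finset.univ.filter
      (fun i : Fin n => decide (x i.castSucc < x (Fin.last n)) = true)).card =
      (Finset.univ.filter fun m : Fin (n + 1) =>
        m ≠ Fin.last n ∧ x m < x (Fin.last n)).card := by
    apply Finset.card_bij (fun j _ => j.castSucc)
    · intro a ha
      simp only [Finset.mem_filter, Finset.mem_univ, true_and, decide_eq_true_eq] at ha ⊢
      exact ⟨(Fin.castSucc_lt_last a).ne, ha⟩
    · intro a _ b _ h
      exact Fin.castSucc_injective n h
    · intro b hb
      simp only [Finset.mem_filter, Finset.mem_univ, true_and, decide_eq_true_eq] at hb ⊢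
      obtain ⟨j, rfl⟩ := Fin.exists_castSucc_eq.mpr hb.1
      exact ⟨j, hb.2, rfl⟩
  rw [hcard]

theorem cnt_card_ge {n : ℕ} (x : Fin (n + 1) → ℝ) (k : ℕ) (hk1 : 1 ≤ k) (hkn : k ≤ n + 1) :
    k ≤ (Finset.univ.filter fun i => cnt x i < k).card := by
  classical
  set l := List.ofFn x with hl
  set v := kthSmallest l k with hv
  have hlen : l.length = n + 1 := by simp [hl]
  have hT : k ≤ (Finset.univ.filter fun i => x i ≤ v).card := by
    have := kthSmallest_countP_le_aux l k hk1 (by omega)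
    rw [hl, countP_ofFn_aux] at this
    simp only [decide_eq_true_eq] at this
    exact this
  have hlt : (Finset.univ.filter fun m => x m < v).card < k := by
    have := (le_kthSmallest_iff_aux l k hk1 (by omega) v).mp le_rfl
    rw [hl, countP_ofFn_aux] at this
    simp only [decide_eq_true_eq] at this
    exact this
  refine le_trans hT (Finset.card_le_card ?_)
  intro i hi
  simp only [Finset.mem_filter, Finset.mem_univ, true_and] at hi ⊢
  unfold cnt
  refine lt_of_le_of_lt (Finset.card_le_card ?_) hlt
  intro m hm
  simp only [Finset.mem_filter, Finset.mem_univ, true_and] at hm ⊢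
  exact lt_of_lt_of_le hm.2 hi

theorem cnt_measurableSet {n : ℕ} (i : Fin (n + 1)) (k : ℕ) :
    MeasurableSet {x : Fin (n + 1) → ℝ | cnt x i < k} := by
  classical
  have hmeas : Measurable fun x : Fin (n + 1) → ℝ => cnt x i := by
    have : (fun x : Fin (n + 1) → ℝ => cnt x i) =
        fun x => ∑ m : Fin (n + 1), if m ≠ i ∧ x m < x i then 1 else 0 := by
      funext x; exact Finset.card_filter _ _
    rw [this]
    apply Finset.measurable_sum
    intro m _
    apply Measurable.ite _ measurable_const measurable_const
    by_cases hmi : m = i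
    · simp [hmi]
    · have : {x : Fin (n + 1) → ℝ | m ≠ i ∧ x m < x i} = {x | x m < x i} := by
        ext x; simp [hmi]
      rw [this]
      exact measurableSet_lt (measurable_pi_apply m) (measurable_pi_apply i)
  exact hmeas measurableSet_Iio

/-- Coverage bound for split conformal prediction with a pretrained score under
nonexchangeable data: if `μ` is the joint law of the scores `S_1, …, S_{n+1}`,
`k = ⌈(1−α)(n+1)⌉ ≤ n`, and `Q` is the `k`-th smallest of `S_1, …, S_n`, then
`P(S_{n+1} ≤ Q) ≥ 1 − α − (1/(n+1)) Σ_{i=1}^n TV(μ, μ^{i↔n+1})`. -/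
theorem conformal_coverage_nonexchangeable
    (n : ℕ) (hn : 1 ≤ n) (α : ℝ) (hα : α ∈ Set.Ioo (0 : ℝ) 1)
    (μ : Measure (Fin (n + 1) → ℝ)) [IsProbabilityMeasure μ]
    (k : ℕ) (hk : k = ⌈(1 - α) * ((n : ℝ) + 1)⌉₊) (hkn : k ≤ n) :
    1 - α - (1 / ((n : ℝ) + 1)) *
        ∑ i : Fin n,
          tvDist μ (μ.map fun s => s ∘ (Equiv.swap i.castSucc (Fin.last n)))
      ≤ (μ {s | s (Fin.last n) ≤
            kthSmallest (List.ofFn fun i : Fin n => s i.castSucc) k}).toReal := by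
  classical
  obtain ⟨hα0, hα1⟩ := hα
  have hk1 : 1 ≤ k := by
    rw [hk]
    have h1a : (0:ℝ) < 1 - α := by linarith
    have h2a : (0:ℝ) < (n : ℝ) + 1 := by positivity
    have : (0:ℝ) < (1 - α) * ((n : ℝ) + 1) := mul_pos h1a h2a
    exact Nat.one_le_iff_ne_zero.mpr (by
      intro h
      rw [Nat.ceil_eq_zero] at h
      linarith)
  -- the events
  set P : Fin (n + 1) → Set (Fin (n + 1) → ℝ) := fun i => {x | cnt x i < k} with hP
  have hPmeas : ∀ i, MeasurableSet (P i) := fun i => cnt_measurableSet i k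
  -- the target event equals P (last n)
  have hevent : {s : Fin (n + 1) → ℝ | s (Fin.last n) ≤
      kthSmallest (List.ofFn fun i : Fin n => s i.castSucc) k} = P (Fin.last n) := by
    ext x
    exact cov_iff_cnt x k hk1 hkn
  rw [hevent]
  -- sum of measures ≥ k
  have hsum : (k : ENNReal) ≤ ∑ i : Fin (n + 1), μ (P i) := by
    have h1 : ∀ i, μ (P i) = ∫⁻ x, (P i).indicator 1 x ∂μ := by
      intro i
      rw [lintegral_indicator_one (hPmeas i)]
    calc (k : ENNReal) = ∫⁻ _, (k : ENNReal) ∂μ := by simp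
      _ ≤ ∫⁻ x, ∑ i : Fin (n + 1), (P i).indicator 1 x ∂μ := by
          apply lintegral_mono
          intro x
          have hge := cnt_card_ge x k hk1 (by omega)
          have : ∑ i : Fin (n + 1), (P i).indicator (1 : (Fin (n+1) → ℝ) → ENNReal) x =
              ((Finset.univ.filter fun i => cnt x i < k).card : ENNReal) := by
            rw [Finset.card_filter]
            push_cast
            apply Finset.sum_congr rfl
            intro i _
            by_cases hi : x ∈ P i
            · rw [Set.indicator_of_mem hi]
              simp only [hP, Set.mem_setOf_eq] at hi
              simp [hi]
            · rw [Set.indicator_of_notMem hi]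
              simp only [hP, Set.mem_setOf_eq] at hi
              simp [hi]
          show (k : ENNReal) ≤ ∑ i : Fin (n + 1), (P i).indicator 1 x
          rw [this]
          exact_mod_cast hge
      _ = ∑ i : Fin (n + 1), ∫⁻ x, (P i).indicator 1 x ∂μ := by
          rw [lintegral_finset_sum]
          intro i _
          exact measurable_const.indicator (hPmeas i)
      _ = ∑ i : Fin (n + 1), μ (P i) := by
          apply Finset.sum_congr rfl
          intro i _
          exact (h1 i).symm
  -- pushforward identities
  have hg : ∀ i : Fin n, Measurable fun s : Fin (n + 1) → ℝ =>
      s ∘ (Equiv.swap i.castSucc (Fin.last n)) := by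
    intro i
    exact measurable_pi_lambda _ (fun j => measurable_pi_apply _)
  have hmap : ∀ i : Fin n,
      (μ.map fun s => s ∘ (Equiv.swap i.castSucc (Fin.last n))) (P (Fin.last n)) =
        μ (P i.castSucc) := by
    intro i
    rw [Measure.map_apply (hg i) (hPmeas _)]
    congr 1
    ext x
    simp only [Set.mem_preimage, hP, Set.mem_setOf_eq]
    rw [cnt_comp_equiv]
    rw [Equiv.swap_apply_right]
  -- TV bounds
  have htoReal_le_one : ∀ (ν : Measure (Fin (n+1) → ℝ)) [IsProbabilityMeasure ν]
      (A : Set (Fin (n+1) → ℝ)), (ν A).toReal ≤ 1 := by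
    intro ν hν A
    rw [← ENNReal.toReal_one]
    exact ENNReal.toReal_mono ENNReal.one_ne_top prob_le_one
  have hTV : ∀ i : Fin n, (μ (P i.castSucc)).toReal ≤ (μ (P (Fin.last n))).toReal +
      tvDist μ (μ.map fun s => s ∘ (Equiv.swap i.castSucc (Fin.last n))) := by
    intro i
    set ν := μ.map fun s => s ∘ (Equiv.swap i.castSucc (Fin.last n)) with hν
    have : IsProbabilityMeasure ν := Measure.isProbabilityMeasure_map (hg i).aemeasurable
    have hbdd : BddAbove (Set.range fun A : {A : Set (Fin (n+1) → ℝ) // MeasurableSet A} =>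
        |(μ A.1).toReal - (ν A.1).toReal|) := by
      refine ⟨1, ?_⟩
      rintro r ⟨A, rfl⟩
      have h1 := htoReal_le_one μ A.1
      have h2 := htoReal_le_one ν A.1
      have h3 : (0:ℝ) ≤ (μ A.1).toReal := ENNReal.toReal_nonneg
      have h4 : (0:ℝ) ≤ (ν A.1).toReal := ENNReal.toReal_nonneg
      rw [abs_sub_le_iff]
      constructor <;> linarith
    have hle : |(μ (P (Fin.last n))).toReal - (ν (P (Fin.last n))).toReal| ≤ tvDist μ ν :=
      le_ciSup hbdd ⟨P (Fin.last n), hPmeas _⟩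
    have heq : (ν (P (Fin.last n))).toReal = (μ (P i.castSucc)).toReal := by
      rw [hν, hmap i]
    rw [heq] at hle
    have := abs_sub_le_iff.mp hle
    linarith [this.2]
  -- pass to reals
  have hfin : ∀ i, μ (P i) ≠ ⊤ := fun i => measure_ne_top μ _
  have hsumR : (k : ℝ) ≤ ∑ i : Fin (n + 1), (μ (P i)).toReal := by
    have hne : ∑ i : Fin (n + 1), μ (P i) ≠ ⊤ := by
      exact (ENNReal.sum_lt_top.mpr (fun i _ => (hfin i).lt_top)).ne
    have := ENNReal.toReal_mono hne hsum
    rwa [ENNReal.toReal_natCast, ENNReal.toReal_sum (fun i _ => hfin i)] at this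
  -- assemble
  set t := (μ (P (Fin.last n))).toReal with ht
  set T := ∑ i : Fin n,
      tvDist μ (μ.map fun s => s ∘ (Equiv.swap i.castSucc (Fin.last n))) with hT
  have hsplit : ∑ i : Fin (n + 1), (μ (P i)).toReal =
      (∑ i : Fin n, (μ (P i.castSucc)).toReal) + t := by
    rw [Fin.sum_univ_castSucc]
  have hbound : ∑ i : Fin n, (μ (P i.castSucc)).toReal ≤ (n : ℝ) * t + T := by
    calc ∑ i : Fin n, (μ (P i.castSucc)).toReal
        ≤ ∑ i : Fin n, (t +
            tvDist μ (μ.map fun s => s ∘ (Equiv.swap i.castSucc (Fin.last n)))) :=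
          Finset.sum_le_sum (fun i _ => hTV i)
      _ = (n : ℝ) * t + T := by
          rw [Finset.sum_add_distrib, Finset.sum_const, Finset.card_univ]
          simp [hT, nsmul_eq_mul]
  have hkey : (k : ℝ) ≤ ((n : ℝ) + 1) * t + T := by
    rw [hsplit] at hsumR
    nlinarith
  have hceil : (1 - α) * ((n : ℝ) + 1) ≤ (k : ℝ) := by
    rw [hk]
    exact Nat.le_ceil _
  have hpos : (0:ℝ) < (n : ℝ) + 1 := by positivity
  rw [show 1 - α - (1 / ((n:ℝ) + 1)) * T = ((1 - α) * ((n:ℝ) + 1) - T) / ((n:ℝ) + 1) by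
    field_simp]
  rw [div_le_iff₀ hpos]
  linarith [hkey, hceil]
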